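/- The limit lim_{n→∞} |C_{0,π/3}(n)| / |C(n)| exists and equals (1 + √3)/16. -/

import Mathlib

set_option maxHeartbeats 1600000

open Real Set Filter

/-- The open interior of the box `B_{i,j}(n) = [i/n,(i+1)/n] × [j/n,(j+1)/n]`. -/
def boxInt (n : ℕ) (i j : ℤ) : Set (ℝ × ℝ) :=
  {p | (i : ℝ) / n < p.1 ∧ p.1 < ((i : ℝ) + 1) / n ∧
       (j : ℝ) / n < p.2 ∧ p.2 < ((j : ℝ) + 1) / n}

/-- The plane unit circle `C`. -/
def unitCircle : Set (ℝ × ℝ) := {p | p.1 ^ 2 + p.2 ^ 2 = 1}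

/-- The approximation `X(n)` of a set `X ⊆ ℝ²`: the boxes (encoded by their index
pairs `(i,j) ∈ ℤ²`) whose open interior intersects `X`. -/
def approx (n : ℕ) (X : Set (ℝ × ℝ)) : Set (ℤ × ℤ) :=
  {ij | (boxInt n ij.1 ij.2 ∩ X).Nonempty}

/-- The open arc `C_{α,β} = {(cos t, sin t) : α < t < β}` of the unit circle. -/
def arc (α β : ℝ) : Set (ℝ × ℝ) :=
  {p | ∃ t : ℝ, α < t ∧ t < β ∧ p = (Real.cos t, Real.sin t)}

/-! ### Auxiliary definitions -/

def Pset (s : ℝ) : Set (ℝ × ℝ) := {p | p.1 ^ 2 + p.2 ^ 2 = 1 ∧ 0 < p.2 ∧ s < p.1}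

noncomputable def tf (n : ℕ) (s : ℝ) (i : ℤ) : ℝ :=
  (n : ℝ) * Real.sqrt (1 - (max ((i : ℝ) / n) s) ^ 2)

noncomputable def Fbox (n : ℕ) (s : ℝ) : Finset (ℤ × ℤ) :=
  (Finset.Ico ⌊(n : ℝ) * s⌋ (n : ℤ)).biUnion fun i =>
    (Finset.Ico ⌊tf n s (i + 1)⌋ ⌈tf n s i⌉).map
      ⟨fun j => (i, j), fun a b h => by simpa using h⟩

open Classical in
noncomputable def Lam (n : ℕ) : ℕ :=
  ((Finset.Ico 1 n).filter fun i => ∃ m : ℕ, i ^ 2 + m ^ 2 = n ^ 2).card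

open Classical in
noncomputable def Tset (n : ℕ) : Finset ℕ :=
  (Finset.Ico 1 n).filter fun i => ∃ m : ℕ, i ^ 2 + m ^ 2 = n ^ 2 ∧ n ≤ 2 * m

lemma approx_Pset_eq (n : ℕ) (hn : 0 < n) (s : ℝ) (hs0 : 0 ≤ s) (hs1 : s < 1) :
    approx n (Pset s) = ↑(Fbox n s) := by
  have hnR : (0:ℝ) < n := by exact_mod_cast hn
  ext ⟨i, j⟩
  simp only [approx, Set.mem_setOf_eq, Finset.mem_coe, Fbox,
    Finset.mem_biUnion, Finset.mem_map, Finset.mem_Ico, Function.Embedding.coeFn_mk,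
    Prod.mk.injEq]
  constructor
  · rintro ⟨⟨x, y⟩, ⟨hx1, hx2, hy1, hy2⟩, hcirc, hypos, hxs⟩
    have hx0 : 0 ≤ x := le_of_lt (lt_of_le_of_lt hs0 hxs)
    have hy2' : y ^ 2 = 1 - x ^ 2 := by dsimp at hcirc; linarith
    have hx1' : x < 1 := by nlinarith
    have hin : i < (n : ℤ) := by
      have : (i : ℝ) < n := by
        have := hx1.trans hx1'
        rw [div_lt_one hnR] at this
        exact this
      exact_mod_cast this
    have hilow : ⌊(n : ℝ) * s⌋ ≤ i := by
      have h1 : (n : ℝ) * s < i + 1 := by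
        have : s < ((i:ℝ) + 1)/n := lt_trans hxs hx2
        rw [lt_div_iff₀ hnR] at this
        linarith [this]
      have h2 : (⌊(n : ℝ) * s⌋ : ℝ) ≤ (n:ℝ)*s := Int.floor_le _
      have : (⌊(n : ℝ) * s⌋ : ℝ) < i + 1 := lt_of_le_of_lt h2 h1
      have : ⌊(n : ℝ) * s⌋ < i + 1 := by exact_mod_cast this
      omega
    refine ⟨i, ⟨hilow, hin⟩, j, ⟨?_, ?_⟩, rfl⟩
    · -- ⌊tf n s (i+1)⌋ ≤ j
      have hmax : max (((i:ℝ) + 1) / n) s = ((i:ℝ)+1)/n :=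
        max_eq_left (le_of_lt (lt_trans hxs hx2))
      have hsq : Real.sqrt (1 - (((i:ℝ)+1)/n) ^ 2) < y := by
        rw [Real.sqrt_lt' hypos]
        nlinarith [hx2, hx0]
      have htf : tf n s (i+1) < (j:ℝ) + 1 := by
        rw [tf]
        push_cast
        rw [hmax]
        have hyj : y < ((j:ℝ)+1)/n := hy2
        calc (n:ℝ) * Real.sqrt (1 - (((i:ℝ)+1)/n) ^ 2) < n * y := by
              exact (mul_lt_mul_iff_right₀ hnR).2 hsq
          _ < (j:ℝ) + 1 := by rw [lt_div_iff₀ hnR] at hyj; linarith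
      exact Int.floor_le_iff.2 (by push_cast; linarith)
    · -- j < ⌈tf n s i⌉
      rw [Int.lt_ceil]
      have hxl : max ((i:ℝ)/n) s < x := max_lt hx1 hxs
      have hxl0 : 0 ≤ max ((i:ℝ)/n) s := le_max_of_le_right hs0
      have : y < Real.sqrt (1 - (max ((i:ℝ)/n) s) ^ 2) := by
        rw [show y = Real.sqrt (y^2) from (Real.sqrt_sq hypos.le).symm]
        apply Real.sqrt_lt_sqrt (by positivity)
        nlinarith
      have hjy : (j:ℝ) < n * y := by
        have := hy1; rw [div_lt_iff₀ hnR] at this; linarith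
      calc (j:ℝ) < n * y := hjy
        _ < tf n s i := by rw [tf]; exact (mul_lt_mul_iff_right₀ hnR).2 this
  · rintro ⟨i', ⟨hilow, hin⟩, j', ⟨hj1, hj2⟩, h⟩
    obtain ⟨rfl, rfl⟩ := Prod.mk.inj (h : (i', j') = (i, j))
    set xl : ℝ := max ((i':ℝ)/n) s with hxl
    set r : ℝ := ((i':ℝ)+1)/n with hr
    have hxl0 : 0 ≤ xl := le_max_of_le_right hs0
    have hsr : s < r := by
      have h1 : (n:ℝ)*s < (i':ℝ) + 1 := by
        have h2 : ((⌊(n : ℝ) * s⌋ : ℝ)) ≤ (i':ℝ) := by exact_mod_cast hilow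
        have := Int.lt_floor_add_one ((n:ℝ)*s)
        linarith
      rw [hr, lt_div_iff₀ hnR]; linarith
    have hxlr : xl < r := by
      rw [hxl]
      apply max_lt _ hsr
      rw [hr, div_lt_div_iff₀ hnR hnR]
      nlinarith
    have hr1 : r ≤ 1 := by
      rw [hr, div_le_one hnR]
      have : (i':ℝ) ≤ (n:ℝ) - 1 := by
        have : (i':ℝ) + 1 ≤ (n:ℝ) := by exact_mod_cast hin
        linarith
      linarith
    have hmaxr : max (((i':ℝ)+1)/n) s = r := max_eq_left hsr.le
    -- y interval
    set lo : ℝ := max ((j':ℝ)/n) (Real.sqrt (1 - r^2)) with hlo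
    set hi : ℝ := min (((j':ℝ)+1)/n) (Real.sqrt (1 - xl^2)) with hhi
    have hjlt : (j':ℝ) < n * Real.sqrt (1 - xl^2) := by
      have := Int.lt_ceil.1 hj2
      rw [tf] at this
      exact this
    have hflt : (n:ℝ) * Real.sqrt (1 - r^2) < (j':ℝ) + 1 := by
      have h := Int.floor_le_iff.1 hj1
      rw [tf] at h
      push_cast at h
      rw [hmaxr] at h
      exact_mod_cast h
    have hlohi : lo < hi := by
      rcases max_cases ((j':ℝ)/n) (Real.sqrt (1 - r^2)) with ⟨h1, _⟩ | ⟨h1, _⟩ <;>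
        rcases min_cases (((j':ℝ)+1)/n) (Real.sqrt (1 - xl^2)) with ⟨h2, _⟩ | ⟨h2, _⟩ <;>
        rw [hlo, hhi, h1, h2]
      · rw [div_lt_div_iff₀ hnR hnR]; nlinarith
      · rw [div_lt_iff₀ hnR]; linarith [hjlt]
      · rw [lt_div_iff₀ hnR]; linarith [hflt]
      · apply Real.sqrt_lt_sqrt (by nlinarith)
        nlinarith
    set y : ℝ := (lo + hi)/2 with hy
    have hylo : lo < y := by rw [hy]; linarith
    have hyhi : y < hi := by rw [hy]; linarith
    have hy0 : 0 < y := lt_of_le_of_lt (le_trans (Real.sqrt_nonneg _) (le_max_right _ _)) hylo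
    have hyub : y < Real.sqrt (1 - xl^2) := lt_of_lt_of_le hyhi (min_le_right _ _)
    have hysq : y^2 < 1 - xl^2 := by
      rw [← Real.lt_sqrt hy0.le]  -- y < sqrt(1-xl^2) ↔ y^2 < 1-xl^2
      exact hyub
    have h1y : 0 < 1 - y^2 := by nlinarith [sq_nonneg xl]
    set x : ℝ := Real.sqrt (1 - y^2) with hx
    have hxsq : x^2 = 1 - y^2 := Real.sq_sqrt h1y.le
    have hxgt : xl < x := by
      rw [hx, show xl = Real.sqrt (xl^2) from (Real.sqrt_sq hxl0).symm]
      apply Real.sqrt_lt_sqrt (by positivity)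
      linarith
    have hxlt : x < r := by
      have hylb : Real.sqrt (1 - r^2) < y := lt_of_le_of_lt (le_max_right _ _) hylo
      have : 1 - r^2 < y^2 := by
        rw [← Real.sqrt_lt' hy0]
        exact hylb
      rw [hx]
      calc Real.sqrt (1 - y^2) < Real.sqrt (r^2) := Real.sqrt_lt_sqrt h1y.le (by linarith)
        _ = r := Real.sqrt_sq (le_trans hs0 hsr.le)
    refine ⟨(x, y), ⟨?_, ?_, ?_, ?_⟩, ?_, hy0, ?_⟩
    · exact lt_of_le_of_lt (le_max_left _ _) hxgt
    · exact hxlt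
    · exact lt_of_le_of_lt (le_max_left _ _) hylo
    · exact lt_of_lt_of_le hyhi (min_le_left _ _)
    · dsimp; rw [hxsq]; ring
    · exact lt_of_le_of_lt (le_max_right _ _) hxgt

lemma tf_antitone (n : ℕ) (s : ℝ) (hn : 0 < n) (hs0 : 0 ≤ s) {i k : ℤ} (hik : i ≤ k) :
    tf n s k ≤ tf n s i := by
  have hnR : (0:ℝ) < n := by exact_mod_cast hn
  unfold tf
  apply mul_le_mul_of_nonneg_left _ (le_of_lt hnR)
  apply Real.sqrt_le_sqrt
  have h1 : (i:ℝ)/n ≤ (k:ℝ)/n := by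
    have : (i:ℝ) ≤ (k:ℝ) := by exact_mod_cast hik
    gcongr
  have h2 : max ((i:ℝ)/n) s ≤ max ((k:ℝ)/n) s := max_le_max h1 le_rfl
  have h0 : 0 ≤ max ((i:ℝ)/n) s := le_max_of_le_right hs0
  nlinarith

lemma Fbox_card (n : ℕ) (hn : 0 < n) (s : ℝ) (hs0 : 0 ≤ s) :
    ((Fbox n s).card : ℤ) =
      ∑ i ∈ Finset.Ico ⌊(n : ℝ) * s⌋ (n : ℤ), (⌈tf n s i⌉ - ⌊tf n s (i + 1)⌋) := by
  unfold Fbox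
  rw [Finset.card_biUnion]
  · push_cast
    apply Finset.sum_congr rfl
    intro i _
    rw [Finset.card_map, Int.card_Ico]
    rw [Int.toNat_of_nonneg]
    have h1 : tf n s (i+1) ≤ tf n s i := tf_antitone n s hn hs0 (by omega)
    have h2 : ⌊tf n s (i+1)⌋ ≤ ⌈tf n s i⌉ :=
      le_trans (Int.floor_le_floor h1) (Int.floor_le_ceil _)
    omega
  · intro a _ b _ hab
    simp only [Finset.disjoint_left, Finset.mem_map, Function.Embedding.coeFn_mk]
    rintro ⟨x, y⟩ ⟨j, _, h1⟩ ⟨k, _, h2⟩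
    apply hab
    injection h1 with hx1 hy1
    injection h2 with hx2 hy2
    omega

-- telescoping
lemma telescope (t : ℤ → ℝ) (a b : ℤ) (hab : a < b) :
    ∑ i ∈ Finset.Ico a b, (⌈t i⌉ - ⌊t (i + 1)⌋) =
      ⌈t a⌉ - ⌊t b⌋ + ∑ i ∈ Finset.Ico (a + 1) b, (⌈t i⌉ - ⌊t i⌋) := by
  have e1 : Finset.Ico a b = insert a (Finset.Ico (a + 1) b) := by
    ext x; simp [Finset.mem_Ico, Finset.mem_insert]; omega
  have e2 : ∑ i ∈ Finset.Ico a b, (⌊t (i + 1)⌋ : ℤ) = ∑ i ∈ Finset.Ico (a+1) (b+1), ⌊t i⌋ := by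
    rw [← Finset.map_add_right_Ico a b 1, Finset.sum_map]
    simp
  have e3 : Finset.Ico (a + 1) (b + 1) = insert b (Finset.Ico (a + 1) b) := by
    ext x; simp [Finset.mem_Ico, Finset.mem_insert]; omega
  rw [Finset.sum_sub_distrib, e2, e3, e1, Finset.sum_insert (by simp), Finset.sum_insert (by simp),
    Finset.sum_sub_distrib]
  ring

lemma tf_top (n : ℕ) (hn : 0 < n) (s : ℝ) (hs0 : 0 ≤ s) :
    tf n s ⌊(n : ℝ) * s⌋ = (n : ℝ) * Real.sqrt (1 - s ^ 2) := by
  have hnR : (0:ℝ) < n := by exact_mod_cast hn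
  unfold tf
  have : max (((⌊(n : ℝ) * s⌋ : ℤ) : ℝ) / n) s = s := by
    apply max_eq_right
    rw [div_le_iff₀ hnR]
    calc ((⌊(n:ℝ)*s⌋ : ℝ)) ≤ (n:ℝ)*s := Int.floor_le _
      _ = s * n := by ring
  rw [this]

lemma tf_bot (n : ℕ) (hn : 0 < n) (s : ℝ) (hs1 : s < 1) : tf n s (n : ℤ) = 0 := by
  have hnR : (0:ℝ) < n := by exact_mod_cast hn
  unfold tf
  have h1 : ((n:ℤ):ℝ)/(n:ℝ) = 1 := by
    push_cast; field_simp
  rw [h1, max_eq_left hs1.le]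
  norm_num

lemma gap_nonneg (x : ℝ) : 0 ≤ ⌈x⌉ - ⌊x⌋ := by linarith [Int.floor_le_ceil x]

lemma gap_le_one (x : ℝ) : ⌈x⌉ - ⌊x⌋ ≤ 1 := by linarith [Int.ceil_le_floor_add_one x]

lemma gap_eq_one (x : ℝ) (h : ∀ k : ℤ, x ≠ k) : 1 ≤ ⌈x⌉ - ⌊x⌋ := by
  rcases lt_or_ge ⌊x⌋ ⌈x⌉ with h1 | h1
  · omega
  · exfalso
    apply h ⌊x⌋
    have h2 := Int.floor_le x
    have h3 := Int.le_ceil x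
    have h4 : (⌈x⌉ : ℝ) ≤ (⌊x⌋ : ℝ) := by exact_mod_cast h1
    linarith

lemma tf_sqrt (n : ℕ) (hn : 0 < n) (s : ℝ) (hs0 : 0 ≤ s) (i : ℤ)
    (hi : ⌊(n : ℝ) * s⌋ + 1 ≤ i) :
    tf n s i = Real.sqrt ((n : ℝ) ^ 2 - (i : ℝ) ^ 2) := by
  have hnR : (0:ℝ) < n := by exact_mod_cast hn
  have hgt : s ≤ (i : ℝ) / n := by
    rw [le_div_iff₀ hnR]
    have h1 : (n:ℝ) * s < ⌊(n:ℝ)*s⌋ + 1 := Int.lt_floor_add_one _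
    have h2 : ((⌊(n:ℝ)*s⌋:ℝ) + 1) ≤ (i:ℝ) := by exact_mod_cast hi
    linarith
  unfold tf
  rw [max_eq_left hgt]
  rw [show (1 - ((i:ℝ)/n)^2) = ((n:ℝ)^2 - (i:ℝ)^2) / (n:ℝ)^2 by field_simp]
  rw [Real.sqrt_div' _ (by positivity), Real.sqrt_sq hnR.le]
  field_simp


lemma Fbox_card_bounds (n : ℕ) (hn : 0 < n) (s : ℝ) (hs0 : 0 ≤ s) (hs1 : s < 1) :
    ⌈(n:ℝ) * Real.sqrt (1 - s^2)⌉ + ((n:ℤ) - 1 - ⌊(n:ℝ)*s⌋) - (Lam n : ℤ) ≤ ((Fbox n s).card : ℤ)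
    ∧ ((Fbox n s).card : ℤ) ≤ ⌈(n:ℝ) * Real.sqrt (1 - s^2)⌉ + ((n:ℤ) - 1 - ⌊(n:ℝ)*s⌋) := by
  classical
  have hnR : (0:ℝ) < n := by exact_mod_cast hn
  set a := ⌊(n:ℝ)*s⌋ with ha
  have ha0 : 0 ≤ a := Int.floor_nonneg.2 (by positivity)
  have hab : a < (n:ℤ) := Int.floor_lt.2 (by push_cast; nlinarith)
  have hcard : ((Finset.Ico (a+1) (n:ℤ)).card : ℤ) = (n:ℤ) - 1 - a := by
    rw [Int.card_Ico]
    omega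
  rw [Fbox_card n hn s hs0, telescope (tf n s) a n hab, tf_top n hn s hs0, tf_bot n hn s hs1]
  simp only [Int.floor_zero, sub_zero]
  set I := Finset.Ico (a+1) (n:ℤ) with hI
  constructor
  · have hlow : ((n:ℤ) - 1 - a) - (Lam n : ℤ) ≤ ∑ i ∈ I, (⌈tf n s i⌉ - ⌊tf n s i⌋) := by
      have step1 : ∑ i ∈ I, ((1:ℤ) - (if (∃ m : ℕ, (i:ℤ)^2 + (m:ℤ)^2 = (n:ℤ)^2) then 1 else 0))
          ≤ ∑ i ∈ I, (⌈tf n s i⌉ - ⌊tf n s i⌋) := by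
        apply Finset.sum_le_sum
        intro i hi
        by_cases hP : (∃ m : ℕ, (i:ℤ)^2 + (m:ℤ)^2 = (n:ℤ)^2)
        · simp only [hP, if_true]
          have := gap_nonneg (tf n s i)
          omega
        · simp only [hP, if_false]
          rw [sub_zero]
          apply gap_eq_one
          intro k hk
          apply hP
          simp only [Finset.mem_Ico, hI] at hi
          have hsq : tf n s i = Real.sqrt ((n:ℝ)^2 - (i:ℝ)^2) := tf_sqrt n hn s hs0 i hi.1
          have hk0 : (0:ℝ) ≤ k := by rw [← hk, hsq]; exact Real.sqrt_nonneg _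
          have hin : (i:ℝ)^2 ≤ (n:ℝ)^2 := by
            have h1 : (0:ℝ) ≤ i := by exact_mod_cast le_trans ha0 (by omega : a ≤ i)
            have h2 : (i:ℝ) ≤ n := by exact_mod_cast hi.2.le
            nlinarith
          have hk2 : ((k:ℝ))^2 = (n:ℝ)^2 - (i:ℝ)^2 := by
            rw [← hk, hsq, Real.sq_sqrt (by linarith)]
          refine ⟨k.toNat, ?_⟩
          have hkk : ((k.toNat : ℤ) : ℝ) = (k:ℝ) := by
            rw [Int.toNat_of_nonneg (by exact_mod_cast hk0)]
          have : ((i:ℤ)^2 + (k.toNat:ℤ)^2 : ℝ) = ((n:ℤ)^2 : ℝ) := by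
            push_cast
            push_cast at hkk
            rw [hkk]
            linarith [hk2]
          exact_mod_cast this
      have step2 : ∑ i ∈ I, ((1:ℤ) - (if (∃ m : ℕ, (i:ℤ)^2 + (m:ℤ)^2 = (n:ℤ)^2) then 1 else 0))
          = (I.card : ℤ) - ((I.filter (fun i => ∃ m : ℕ, (i:ℤ)^2 + (m:ℤ)^2 = (n:ℤ)^2)).card : ℤ) := by
        rw [Finset.sum_sub_distrib]
        congr 1
        · simp
        · rw [Finset.sum_boole]
      have step3 : (I.filter (fun i => ∃ m : ℕ, (i:ℤ)^2 + (m:ℤ)^2 = (n:ℤ)^2)).card ≤ Lam n := by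
        unfold Lam
        apply Finset.card_le_card_of_injOn (fun i => i.toNat)
        · intro i hi
          simp only [Finset.mem_coe, Finset.mem_filter, Finset.mem_Ico, hI] at hi ⊢
          obtain ⟨⟨hi1, hi2⟩, m, hm⟩ := hi
          have hipos : 0 < i := by omega
          refine ⟨⟨by omega, by omega⟩, m, ?_⟩
          have : ((i.toNat : ℤ))^2 + (m:ℤ)^2 = ((n:ℕ):ℤ)^2 := by
            rw [Int.toNat_of_nonneg hipos.le]; exact hm
          exact_mod_cast this
        · intro x hx y hy hxy
          simp only [Finset.mem_coe, Finset.mem_filter, Finset.mem_Ico, hI] at hx hy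
          simp only at hxy
          omega
      calc ((n:ℤ) - 1 - a) - (Lam n : ℤ)
          ≤ (I.card : ℤ) - ((I.filter (fun i => ∃ m : ℕ, (i:ℤ)^2 + (m:ℤ)^2 = (n:ℤ)^2)).card : ℤ) := by
            rw [hcard]
            have := step3
            omega
        _ = _ := step2.symm
        _ ≤ _ := step1
    omega
  · have hup : ∑ i ∈ I, (⌈tf n s i⌉ - ⌊tf n s i⌋) ≤ ((n:ℤ) - 1 - a) := by
      calc ∑ i ∈ I, (⌈tf n s i⌉ - ⌊tf n s i⌋) ≤ ∑ _i ∈ I, (1:ℤ) :=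
            Finset.sum_le_sum (fun i _ => gap_le_one _)
        _ = (I.card : ℤ) := by simp
        _ = (n:ℤ) - 1 - a := hcard
    omega

lemma three_pts (n w a b c x y z : ℤ) (hn : 0 < n) (hw : 0 < w)
    (h1 : a ^ 2 + x ^ 2 = n ^ 2) (h2 : b ^ 2 + y ^ 2 = n ^ 2) (h3 : c ^ 2 + z ^ 2 = n ^ 2)
    (ha : 0 < a) (hab : a < b) (hbc : b < c) (hwin : c - a ≤ w)
    (hx : n ≤ 2 * x) (hy : n ≤ 2 * y) (hz : n ≤ 2 * z) : n ≤ 6 * w ^ 3 := by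
  have hb : 0 < b := by omega
  have hc : 0 < c := by omega
  have hxp : 0 < x := by omega
  have hyp : 0 < y := by omega
  have hzp : 0 < z := by omega
  have hcn : c < n := by nlinarith
  have hbn : b < n := by nlinarith
  have han : a < n := by nlinarith
  have hxn : x ≤ n := by nlinarith
  have hyn : y ≤ n := by nlinarith
  have hzn : z ≤ n := by nlinarith
  have hxy : y < x := by nlinarith
  have hyz : z < y := by nlinarith
  -- key identity
  set D : ℤ := (b - a) * (x - z) - (c - a) * (x - y) with hD
  set N : ℤ := (a + b) * (y - z) + (x + y) * (c - b) with hN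
  have hxz2 : x ^ 2 - z ^ 2 = c ^ 2 - a ^ 2 := by linarith
  have hxy2 : x ^ 2 - y ^ 2 = b ^ 2 - a ^ 2 := by linarith
  have key : D * ((x + y) * (x + z)) = (b - a) * (c - a) * N := by
    linear_combination ((b-a)*(x+y)) * hxz2 - ((c-a)*(x+z)) * hxy2
  have hNpos : 0 < N := by
    apply add_pos <;> apply mul_pos <;> omega
  have hDpos : 0 < D := by
    rcases lt_trichotomy D 0 with h | h | h
    · exfalso
      have hlhs : D * ((x + y) * (x + z)) < 0 := by
        apply mul_neg_of_neg_of_pos h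
        apply mul_pos <;> omega
      have hrhs : 0 < (b - a) * (c - a) * N := by
        apply mul_pos (mul_pos (by omega) (by omega)) hNpos
      omega
    · exfalso
      rw [h, zero_mul] at key
      have : 0 < (b - a) * (c - a) * N := mul_pos (mul_pos (by omega) (by omega)) hNpos
      omega
    · exact h
  -- bounds
  have hyz2w : y - z ≤ 2 * w := by
    have h4 : (y - z) * (y + z) = (c - b) * (c + b) := by nlinarith [h2, h3]
    have h5 : (y - z) * n ≤ (y - z) * (y + z) := by
      apply mul_le_mul_of_nonneg_left (by omega) (by omega)
    have h6 : (c - b) * (c + b) ≤ w * (2 * n) := by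
      apply mul_le_mul (by omega) (by omega) (by omega) (by omega)
    nlinarith
  have hNle : N ≤ 6 * n * w := by
    have t1 : (a + b) * (y - z) ≤ (2 * n) * (2 * w) := by
      apply mul_le_mul (by omega) hyz2w (by omega) (by omega)
    have t2 : (x + y) * (c - b) ≤ (2 * n) * w := by
      apply mul_le_mul (by omega) (by omega) (by omega) (by omega)
    nlinarith
  have hfin : n * n ≤ w * w * (6 * n * w) := by
    calc n * n ≤ (x + y) * (x + z) := by
          apply mul_le_mul (by omega) (by omega) (by omega) (by omega)
      _ ≤ D * ((x + y) * (x + z)) := by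
          have h0 : (0:ℤ) ≤ (x + y) * (x + z) := mul_nonneg (by omega) (by omega)
          exact le_mul_of_one_le_left h0 (by omega)
      _ = (b - a) * (c - a) * N := key
      _ ≤ w * w * N := by
          have : (b - a) * (c - a) ≤ w * w := by
            apply mul_le_mul (by omega) (by omega) (by omega) (by omega)
          exact mul_le_mul_of_nonneg_right this hNpos.le
      _ ≤ w * w * (6 * n * w) := by
          apply mul_le_mul_of_nonneg_left hNle (by positivity)
  nlinarith

lemma exists_three (F : Finset ℕ) (h : 3 ≤ F.card) :
    ∃ a ∈ F, ∃ b ∈ F, ∃ c ∈ F, a < b ∧ b < c := by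
  have hne : F.Nonempty := by rw [← Finset.card_pos]; omega
  have h2 : 1 < F.card := by omega
  have hac : F.min' hne < F.max' hne := Finset.min'_lt_max'_of_card F h2
  have hcard : 1 ≤ ((F.erase (F.min' hne)).erase (F.max' hne)).card := by
    have e1 := Finset.card_erase_of_mem (Finset.max'_mem F hne)
    have hmem : F.min' hne ∈ F.erase (F.max' hne) := by
      rw [Finset.mem_erase]
      exact ⟨by omega, Finset.min'_mem F hne⟩
    have e2 := Finset.card_erase_of_mem hmem
    rw [Finset.erase_right_comm]
    omega
  obtain ⟨b, hb⟩ := Finset.card_pos.1 hcard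
  rw [Finset.mem_erase, Finset.mem_erase] at hb
  obtain ⟨hbc, hba, hbF⟩ := hb
  refine ⟨F.min' hne, Finset.min'_mem F hne, b, hbF, F.max' hne, Finset.max'_mem F hne, ?_, ?_⟩
  · have := F.min'_le b hbF; omega
  · have := F.le_max' b hbF; omega

lemma Tset_card_le (n w : ℕ) (hw : 1 ≤ w) (hn : 6 * w ^ 3 < n) :
    (Tset n).card ≤ 2 * (n / w + 1) := by
  classical
  have hmap : ∀ i ∈ Tset n, (i - 1) / w ∈ Finset.range (n / w + 1) := by
    intro i hi
    simp only [Tset, Finset.mem_filter, Finset.mem_Ico] at hi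
    rw [Finset.mem_range]
    have : (i - 1) / w ≤ n / w := Nat.div_le_div_right (by omega)
    omega
  rw [Finset.card_eq_sum_card_fiberwise hmap]
  have hfib : ∀ k ∈ Finset.range (n / w + 1),
      ((Tset n).filter fun i => (i - 1) / w = k).card ≤ 2 := by
    intro k _
    by_contra hcon
    push_neg at hcon
    obtain ⟨a, hA, b, hB, c, hC, hab, hbc⟩ :=
      exists_three _ (by omega : 3 ≤ ((Tset n).filter fun i => (i - 1) / w = k).card)
    simp only [Finset.mem_filter, Tset, Finset.mem_Ico] at hA hB hC
    obtain ⟨⟨⟨ha1, ha2⟩, x, hx, hx2⟩, hka⟩ := hA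
    obtain ⟨⟨⟨hb1, hb2⟩, y, hy, hy2⟩, hkb⟩ := hB
    obtain ⟨⟨⟨hc1, hc2⟩, z, hz, hz2⟩, hkc⟩ := hC
    have hwin : c - a ≤ w := by
      have h1 : k * w ≤ a - 1 := by
        calc k * w = (a - 1) / w * w := by rw [hka]
          _ ≤ a - 1 := Nat.div_mul_le_self _ _
      have h2 : c - 1 < (k + 1) * w := by
        rw [← Nat.div_lt_iff_lt_mul (by omega : 0 < w), hkc]
        omega
      have h3 : (k+1) * w = k * w + w := by ring
      omega
    have := three_pts (n:ℤ) (w:ℤ) a b c x y z (by exact_mod_cast (by omega : 0 < n)) (by exact_mod_cast hw)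
      (by exact_mod_cast hx) (by exact_mod_cast hy) (by exact_mod_cast hz)
      (by exact_mod_cast ha1) (by exact_mod_cast hab) (by exact_mod_cast hbc)
      (by push_cast; omega) (by exact_mod_cast hx2) (by exact_mod_cast hy2)
      (by exact_mod_cast hz2)
    have : n ≤ 6 * w ^ 3 := by exact_mod_cast this
    omega
  calc ∑ k ∈ Finset.range (n / w + 1), ((Tset n).filter fun i => (i - 1) / w = k).card
      ≤ ∑ _k ∈ Finset.range (n / w + 1), 2 := Finset.sum_le_sum hfib
    _ = 2 * (n / w + 1) := by
      rw [Finset.sum_const, Finset.card_range]; ring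

lemma Lam_le_two_Tset (n : ℕ) (hn : 2 ≤ n) : Lam n ≤ 2 * (Tset n).card := by
  classical
  unfold Lam
  set S := (Finset.Ico 1 n).filter fun i => ∃ m : ℕ, i ^ 2 + m ^ 2 = n ^ 2 with hS
  have hsplit := Finset.card_filter_add_card_filter_not
    (s := S) (p := fun i => i ∈ Tset n)
  have h1 : (S.filter fun i => i ∈ Tset n).card ≤ (Tset n).card := by
    apply Finset.card_le_card
    intro i hi
    exact (Finset.mem_filter.1 hi).2
  have h2 : (S.filter fun i => ¬ i ∈ Tset n).card ≤ (Tset n).card := by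
    apply Finset.card_le_card_of_injOn (fun i => Nat.sqrt (n ^ 2 - i ^ 2))
    · intro i hi
      simp only [Finset.mem_coe, Finset.mem_filter, hS, Finset.mem_Ico, Tset] at hi
      obtain ⟨⟨⟨hi1, hi2⟩, m, hm⟩, hnot⟩ := hi
      have hmsq : n ^ 2 - i ^ 2 = m ^ 2 := by omega
      have hsq : Nat.sqrt (n ^ 2 - i ^ 2) = m := by
        rw [hmsq, Nat.sqrt_eq']
      simp only [Finset.mem_coe, hsq]
      have hmlow : ¬ (n ≤ 2 * m) := by
        intro hc
        exact hnot ⟨⟨hi1, hi2⟩, m, hm, hc⟩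
      have h2m : 2 * m < n := by omega
      have hm1 : 1 ≤ m := by nlinarith
      have hmn : m < n := by nlinarith
      have hni : n ≤ 2 * i := by nlinarith
      simp only [Tset, Finset.mem_filter, Finset.mem_Ico]
      exact ⟨⟨hm1, hmn⟩, i, by omega, hni⟩
    · intro u hu v hv huv
      simp only [Finset.mem_coe, Finset.mem_filter, hS, Finset.mem_Ico] at hu hv
      obtain ⟨⟨⟨hu1, hu2⟩, m, hm⟩, _⟩ := hu
      obtain ⟨⟨⟨hv1, hv2⟩, m', hm'⟩, _⟩ := hv
      simp only at huv
      have e1 : n ^ 2 - u ^ 2 = m ^ 2 := by omega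
      have e2 : n ^ 2 - v ^ 2 = m' ^ 2 := by omega
      rw [e1, e2, Nat.sqrt_eq', Nat.sqrt_eq'] at huv
      subst huv
      nlinarith
  omega

lemma Lam_tendsto : Tendsto (fun n : ℕ => (Lam n : ℝ) / n) atTop (nhds 0) := by
  rw [Metric.tendsto_atTop]
  intro ε hε
  obtain ⟨w, hw⟩ : ∃ w : ℕ, 1 ≤ w ∧ (8 : ℝ) / ε ≤ w := by
    obtain ⟨w, hw⟩ := exists_nat_ge ((8:ℝ)/ε)
    exact ⟨max w 1, le_max_right _ _, hw.trans (by exact_mod_cast le_max_left _ _)⟩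
  obtain ⟨N, hN⟩ : ∃ N : ℕ, 6 * w ^ 3 < N ∧ 2 ≤ N ∧ (9 : ℝ) / ε ≤ N := by
    obtain ⟨M, hM⟩ := exists_nat_ge ((9:ℝ)/ε)
    refine ⟨max (max (6 * w ^ 3 + 1) 2) M, ?_, ?_, ?_⟩
    · have := le_max_left (max (6 * w ^ 3 + 1) 2) M
      have := le_max_left (6 * w ^ 3 + 1) 2
      omega
    · have := le_max_left (max (6 * w ^ 3 + 1) 2) M
      have := le_max_right (6 * w ^ 3 + 1) 2
      omega
    · exact hM.trans (by exact_mod_cast le_max_right _ _)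
  refine ⟨N, fun n hn => ?_⟩
  have hn2 : 2 ≤ n := le_trans hN.2.1 hn
  have hnw : 6 * w ^ 3 < n := lt_of_lt_of_le hN.1 hn
  have hbound : Lam n ≤ 4 * (n / w) + 4 := by
    have := Lam_le_two_Tset n hn2
    have := Tset_card_le n w hw.1 hnw
    omega
  have hnR : (0:ℝ) < n := by positivity
  have hwR : (0:ℝ) < w := by exact_mod_cast hw.1
  rw [Real.dist_eq, sub_zero, abs_of_nonneg (by positivity)]
  have hd : ((n / w : ℕ) : ℝ) ≤ (n : ℝ) / w := by
    rw [le_div_iff₀ hwR]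
    exact_mod_cast Nat.div_mul_le_self n w
  have hLam : (Lam n : ℝ) ≤ 4 * ((n:ℝ) / w) + 4 := by
    calc (Lam n : ℝ) ≤ ((4 * (n / w) + 4 : ℕ) : ℝ) := by exact_mod_cast hbound
      _ = 4 * ((n / w : ℕ) : ℝ) + 4 := by push_cast; ring
      _ ≤ 4 * ((n:ℝ) / w) + 4 := by linarith
  have hεn : (9:ℝ) / ε ≤ n := le_trans hN.2.2 (by exact_mod_cast hn)
  have key : (Lam n : ℝ) / n ≤ 4 / w + 4 / n := by
    rw [div_le_iff₀ hnR]
    have : (4 / (w:ℝ) + 4 / n) * n = 4 * ((n:ℝ)/w) + 4 := by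
      field_simp
    rw [this]
    exact hLam
  have h1 : (4:ℝ) / w ≤ ε / 2 := by
    rw [div_le_iff₀ hwR]
    have h8 : (8:ℝ) / ε ≤ w := hw.2
    rw [div_le_iff₀ hε] at h8
    linarith
  have h2 : (4:ℝ) / n < ε / 2 := by
    rw [div_lt_iff₀ hnR]
    rw [div_le_iff₀ hε] at hεn
    nlinarith
  linarith

lemma arc_eq_Pset : arc 0 (Real.pi / 3) = Pset (1 / 2) := by
  have hpi := Real.pi_pos
  ext ⟨x, y⟩
  constructor
  · rintro ⟨t, ht0, ht3, heq⟩
    obtain ⟨rfl, rfl⟩ : x = Real.cos t ∧ y = Real.sin t := by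
      constructor <;> · injection heq
    refine ⟨Real.cos_sq_add_sin_sq t, ?_, ?_⟩
    · exact Real.sin_pos_of_pos_of_lt_pi ht0 (by linarith)
    · have := Real.cos_lt_cos_of_nonneg_of_le_pi ht0.le (by linarith : Real.pi/3 ≤ Real.pi) ht3
      rw [Real.cos_pi_div_three] at this
      exact this
  · rintro ⟨hcirc, hy, hx⟩
    dsimp at hcirc hy hx
    have hx1 : x < 1 := by nlinarith
    have hxm1 : -1 ≤ x := by nlinarith
    refine ⟨Real.arccos x, Real.arccos_pos.2 hx1, ?_, ?_⟩
    · have h13 : Real.arccos x < Real.arccos (1/2) := by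
        apply strictAntiOn_arccos ⟨by norm_num, by norm_num⟩ ⟨hxm1, hx1.le⟩ hx
      have : Real.arccos (1/2) = Real.pi / 3 := by
        rw [show (1/2 : ℝ) = Real.cos (Real.pi/3) by rw [Real.cos_pi_div_three]]
        exact Real.arccos_cos (by positivity) (by linarith)
      rw [this] at h13
      exact h13
    · have h1 : Real.cos (Real.arccos x) = x := Real.cos_arccos hxm1 hx1.le
      have h2 : Real.sin (Real.arccos x) = Real.sqrt (1 - x^2) := Real.sin_arccos x
      have h3 : Real.sqrt (1 - x^2) = y := by
        rw [show 1 - x^2 = y^2 by linarith]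
        exact Real.sqrt_sq hy.le
      rw [Prod.ext_iff]
      exact ⟨by simp [h1], by simp [h2, h3]⟩

lemma mem_boxInt_negx (n : ℕ) (i j : ℤ) (p : ℝ × ℝ) (hn : 0 < n) :
    p ∈ boxInt n i j ↔ ((-p.1, p.2) : ℝ × ℝ) ∈ boxInt n (-1 - i) j := by
  have hnR : (0:ℝ) < n := by exact_mod_cast hn
  simp only [boxInt, Set.mem_setOf_eq]
  push_cast
  simp only [div_lt_iff₀ hnR, lt_div_iff₀ hnR]
  constructor
  · rintro ⟨h1, h2, h3, h4⟩
    exact ⟨by linarith, by linarith, h3, h4⟩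
  · rintro ⟨h1, h2, h3, h4⟩
    exact ⟨by linarith, by linarith, h3, h4⟩

lemma mem_boxInt_negy (n : ℕ) (i j : ℤ) (p : ℝ × ℝ) (hn : 0 < n) :
    p ∈ boxInt n i j ↔ ((p.1, -p.2) : ℝ × ℝ) ∈ boxInt n i (-1 - j) := by
  have hnR : (0:ℝ) < n := by exact_mod_cast hn
  simp only [boxInt, Set.mem_setOf_eq]
  push_cast
  simp only [div_lt_iff₀ hnR, lt_div_iff₀ hnR]
  constructor
  · rintro ⟨h1, h2, h3, h4⟩
    exact ⟨h1, h2, by linarith, by linarith⟩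
  · rintro ⟨h1, h2, h3, h4⟩
    exact ⟨h1, h2, by linarith, by linarith⟩

lemma approx_negx (n : ℕ) (hn : 0 < n) (X : Set (ℝ × ℝ)) :
    approx n ((fun p : ℝ × ℝ => (-p.1, p.2)) ⁻¹' X) =
      (fun ij : ℤ × ℤ => (-1 - ij.1, ij.2)) '' approx n X := by
  ext ⟨i, j⟩
  simp only [approx, Set.mem_setOf_eq, Set.mem_image, Prod.exists]
  constructor
  · rintro ⟨p, hb, hX⟩
    refine ⟨-1 - i, j, ⟨(-p.1, p.2), ?_, hX⟩, by rw [Prod.mk.injEq]; exact ⟨by omega, rfl⟩⟩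
    exact (mem_boxInt_negx n i j p hn).1 hb
  · rintro ⟨a, b, ⟨p, hb, hX⟩, heq⟩
    obtain ⟨ha, hb'⟩ : -1 - a = i ∧ b = j := by
      constructor <;> · injection heq
    subst hb'
    refine ⟨(-p.1, p.2), ?_, by simpa using hX⟩
    have := (mem_boxInt_negx n a b p hn).1 hb
    rw [← ha]
    exact this

lemma approx_negy (n : ℕ) (hn : 0 < n) (X : Set (ℝ × ℝ)) :
    approx n ((fun p : ℝ × ℝ => (p.1, -p.2)) ⁻¹' X) =
      (fun ij : ℤ × ℤ => (ij.1, -1 - ij.2)) '' approx n X := by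
  ext ⟨i, j⟩
  simp only [approx, Set.mem_setOf_eq, Set.mem_image, Prod.exists]
  constructor
  · rintro ⟨p, hb, hX⟩
    refine ⟨i, -1 - j, ⟨(p.1, -p.2), ?_, hX⟩, by rw [Prod.mk.injEq]; exact ⟨rfl, by omega⟩⟩
    exact (mem_boxInt_negy n i j p hn).1 hb
  · rintro ⟨a, b, ⟨p, hb, hX⟩, heq⟩
    obtain ⟨ha, hb'⟩ : a = i ∧ -1 - b = j := by
      constructor <;> · injection heq
    subst ha
    refine ⟨(p.1, -p.2), ?_, by simpa using hX⟩
    have := (mem_boxInt_negy n a b p hn).1 hb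
    rw [← hb']
    exact this

lemma approx_union (n : ℕ) (X Y : Set (ℝ × ℝ)) :
    approx n (X ∪ Y) = approx n X ∪ approx n Y := by
  ext ij
  simp only [approx, Set.mem_setOf_eq, Set.mem_union]
  rw [Set.inter_union_distrib_left, Set.union_nonempty]

lemma approx_axis_x (n : ℕ) (x0 : ℝ) : approx n {((x0, 0) : ℝ × ℝ)} = ∅ := by
  ext ⟨i, j⟩
  simp only [approx, Set.mem_setOf_eq, Set.mem_empty_iff_false, iff_false]
  rintro ⟨p, hb, hp⟩
  rw [Set.mem_singleton_iff] at hp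
  subst hp
  obtain ⟨_, _, h3, h4⟩ := hb
  rcases Nat.eq_zero_or_pos n with rfl | hn
  · simp at h3 h4
  · have hnR : (0:ℝ) < n := by exact_mod_cast hn
    rw [div_lt_iff₀ hnR, zero_mul] at h3
    rw [lt_div_iff₀ hnR, zero_mul] at h4
    have hj1 : j < 0 := by exact_mod_cast h3
    have hj2 : (0:ℤ) < j + 1 := by exact_mod_cast h4
    omega

lemma approx_axis_y (n : ℕ) (y0 : ℝ) : approx n {((0, y0) : ℝ × ℝ)} = ∅ := by
  ext ⟨i, j⟩
  simp only [approx, Set.mem_setOf_eq, Set.mem_empty_iff_false, iff_false]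
  rintro ⟨p, hb, hp⟩
  rw [Set.mem_singleton_iff] at hp
  subst hp
  obtain ⟨h1, h2, _, _⟩ := hb
  rcases Nat.eq_zero_or_pos n with rfl | hn
  · simp at h1 h2
  · have hnR : (0:ℝ) < n := by exact_mod_cast hn
    rw [div_lt_iff₀ hnR, zero_mul] at h1
    rw [lt_div_iff₀ hnR, zero_mul] at h2
    have hi1 : i < 0 := by exact_mod_cast h1
    have hi2 : (0:ℤ) < i + 1 := by exact_mod_cast h2
    omega

lemma circle_decomp :
    unitCircle = Pset 0 ∪ ((fun p : ℝ × ℝ => (-p.1, p.2)) ⁻¹' Pset 0)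
      ∪ ((fun p : ℝ × ℝ => (p.1, -p.2)) ⁻¹' Pset 0)
      ∪ ((fun p : ℝ × ℝ => (-p.1, p.2)) ⁻¹' ((fun p : ℝ × ℝ => (p.1, -p.2)) ⁻¹' Pset 0))
      ∪ ({((1:ℝ), (0:ℝ))} ∪ {((-1:ℝ), (0:ℝ))} ∪ {((0:ℝ), (1:ℝ))} ∪ {((0:ℝ), (-1:ℝ))}) := by
  ext ⟨x, y⟩
  simp only [unitCircle, Pset, Set.mem_union, Set.mem_preimage, Set.mem_setOf_eq,
    Set.mem_singleton_iff, Prod.mk.injEq]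
  constructor
  · intro hcirc
    rcases lt_trichotomy x 0 with hx | hx | hx <;> rcases lt_trichotomy y 0 with hy | hy | hy
    · left; right
      exact ⟨by nlinarith, by linarith, by linarith⟩
    · subst hy
      have h0 : (x - 1) * (x + 1) = 0 := by nlinarith
      rcases mul_eq_zero.1 h0 with h | h
      · exfalso; linarith
      · right; left; left; right
        exact ⟨by linarith, rfl⟩
    · left; left; left; right
      exact ⟨by nlinarith, hy, by linarith⟩
    · subst hx
      have h0 : (y - 1) * (y + 1) = 0 := by nlinarith
      rcases mul_eq_zero.1 h0 with h | h
      · exfalso; linarith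
      · right; right
        exact ⟨rfl, by linarith⟩
    · exfalso; subst hx; subst hy; nlinarith
    · subst hx
      have h0 : (y - 1) * (y + 1) = 0 := by nlinarith
      rcases mul_eq_zero.1 h0 with h | h
      · right; left; right
        exact ⟨rfl, by linarith⟩
      · exfalso; linarith
    · left; left; right
      exact ⟨by nlinarith, by linarith, hx⟩
    · subst hy
      have h0 : (x - 1) * (x + 1) = 0 := by nlinarith
      rcases mul_eq_zero.1 h0 with h | h
      · right; left; left; left
        exact ⟨by linarith, rfl⟩
      · exfalso; linarith
    · left; left; left; left
      exact ⟨hcirc, hy, hx⟩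
  · rintro ((((⟨h, _, _⟩ | ⟨h, h2, h3⟩) | ⟨h, h2, h3⟩) | ⟨h, h2, h3⟩) |
      ((⟨rfl, rfl⟩ | ⟨rfl, rfl⟩) | ⟨rfl, rfl⟩ | ⟨rfl, rfl⟩)) <;> first
    | nlinarith
    | norm_num

lemma Pset_sign (n : ℕ) (hn : 0 < n) (ij : ℤ × ℤ) (h : ij ∈ approx n (Pset 0)) :
    0 ≤ ij.1 ∧ 0 ≤ ij.2 := by
  have hnR : (0:ℝ) < n := by exact_mod_cast hn
  obtain ⟨p, ⟨h1, h2, h3, h4⟩, _, hy, hx⟩ := h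
  constructor
  · have : (0:ℝ) < (ij.1:ℝ) + 1 := by
      rw [lt_div_iff₀ hnR] at h2
      nlinarith
    have : (0:ℤ) < ij.1 + 1 := by exact_mod_cast this
    omega
  · have : (0:ℝ) < (ij.2:ℝ) + 1 := by
      rw [lt_div_iff₀ hnR] at h4
      nlinarith
    have : (0:ℤ) < ij.2 + 1 := by exact_mod_cast this
    omega

lemma circle_ncard (n : ℕ) (hn : 0 < n) :
    (approx n unitCircle).ncard = 4 * (approx n (Pset 0)).ncard := by
  classical
  set A := approx n (Pset 0) with hA
  have hfin : A.Finite := by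
    rw [hA, approx_Pset_eq n hn 0 le_rfl one_pos]
    exact (Fbox n 0).finite_toSet
  set φx : ℤ × ℤ → ℤ × ℤ := fun ij => (-1 - ij.1, ij.2) with hφx
  set φy : ℤ × ℤ → ℤ × ℤ := fun ij => (ij.1, -1 - ij.2) with hφy
  have hφxinj : Function.Injective φx := by
    intro u v huv
    simp only [hφx, Prod.mk.injEq] at huv
    exact Prod.ext (by omega) huv.2
  have hφyinj : Function.Injective φy := by
    intro u v huv
    simp only [hφy, Prod.mk.injEq] at huv
    exact Prod.ext huv.1 (by omega)
  have hd : approx n unitCircle = A ∪ φx '' A ∪ φy '' A ∪ φx '' (φy '' A) := by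
    rw [circle_decomp, approx_union, approx_union, approx_union, approx_union,
      approx_union, approx_union, approx_union]
    rw [approx_axis_x n 1, approx_axis_x n (-1), approx_axis_y n 1, approx_axis_y n (-1)]
    rw [approx_negx n hn, approx_negy n hn, approx_negx n hn, approx_negy n hn]
    simp only [Set.union_empty, hA, hφx, hφy]
  rw [hd]
  have sx : ∀ ij ∈ φx '' A, ij.1 < 0 ∧ 0 ≤ ij.2 := by
    rintro ij ⟨u, hu, rfl⟩
    have := Pset_sign n hn u hu
    simp only [hφx]
    omega
  have sy : ∀ ij ∈ φy '' A, 0 ≤ ij.1 ∧ ij.2 < 0 := by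
    rintro ij ⟨u, hu, rfl⟩
    have := Pset_sign n hn u hu
    simp only [hφy]
    omega
  have sxy : ∀ ij ∈ φx '' (φy '' A), ij.1 < 0 ∧ ij.2 < 0 := by
    rintro ij ⟨u, ⟨v, hv, rfl⟩, rfl⟩
    have := Pset_sign n hn v hv
    simp only [hφx, hφy]
    omega
  have sa : ∀ ij ∈ A, 0 ≤ ij.1 ∧ 0 ≤ ij.2 := fun ij h => Pset_sign n hn ij h
  have d1 : Disjoint (A ∪ φx '' A ∪ φy '' A) (φx '' (φy '' A)) := by
    rw [Set.disjoint_left]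
    rintro ij ((h | h) | h) hc
    · have := sa ij h; have := sxy ij hc; omega
    · have := sx ij h; have := sxy ij hc; omega
    · have := sy ij h; have := sxy ij hc; omega
  have d2 : Disjoint (A ∪ φx '' A) (φy '' A) := by
    rw [Set.disjoint_left]
    rintro ij (h | h) hc
    · have := sa ij h; have := sy ij hc; omega
    · have := sx ij h; have := sy ij hc; omega
  have d3 : Disjoint A (φx '' A) := by
    rw [Set.disjoint_left]
    intro ij h hc
    have := sa ij h; have := sx ij hc; omega
  rw [Set.ncard_union_eq d1 (by
      exact ((hfin.union (hfin.image φx)).union (hfin.image φy))) ((hfin.image φy).image φx)]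
  rw [Set.ncard_union_eq d2 (hfin.union (hfin.image φx)) (hfin.image φy)]
  rw [Set.ncard_union_eq d3 hfin (hfin.image φx)]
  rw [Set.ncard_image_of_injective _ hφxinj, Set.ncard_image_of_injective _ hφyinj,
    Set.ncard_image_of_injective _ hφxinj, Set.ncard_image_of_injective _ hφyinj]
  ring

lemma ncard_bound (n : ℕ) (hn : 0 < n) (s : ℝ) (hs0 : 0 ≤ s) (hs1 : s < 1) :
    |((approx n (Pset s)).ncard : ℝ) - n * (Real.sqrt (1 - s ^ 2) + 1 - s)| ≤
      2 + Lam n := by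
  rw [approx_Pset_eq n hn s hs0 hs1, Set.ncard_coe_finset]
  obtain ⟨hlo, hhi⟩ := Fbox_card_bounds n hn s hs0 hs1
  have hlo' : ((⌈(n:ℝ) * Real.sqrt (1 - s^2)⌉ : ℝ) + ((n:ℝ) - 1 - (⌊(n:ℝ)*s⌋ : ℝ)) - (Lam n : ℝ))
      ≤ ((Fbox n s).card : ℝ) := by exact_mod_cast hlo
  have hhi' : ((Fbox n s).card : ℝ) ≤
      ((⌈(n:ℝ) * Real.sqrt (1 - s^2)⌉ : ℝ) + ((n:ℝ) - 1 - (⌊(n:ℝ)*s⌋ : ℝ))) := by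
    exact_mod_cast hhi
  have c1 := Int.le_ceil ((n:ℝ) * Real.sqrt (1 - s^2))
  have c2 := Int.ceil_lt_add_one ((n:ℝ) * Real.sqrt (1 - s^2))
  have f1 := Int.floor_le ((n:ℝ) * s)
  have f2 := Int.lt_floor_add_one ((n:ℝ) * s)
  rw [abs_le]
  constructor
  · have hL : (0:ℝ) ≤ Lam n := by positivity
    nlinarith
  · nlinarith

lemma tendsto_err : Tendsto (fun n : ℕ => (2 + (Lam n : ℝ)) / n) atTop (nhds 0) := by
  have h1 : Tendsto (fun n : ℕ => (2:ℝ) / n) atTop (nhds 0) :=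
    tendsto_const_div_atTop_nhds_zero_nat 2
  have h2 := Lam_tendsto
  have := h1.add h2
  rw [add_zero] at this
  apply this.congr'
  filter_upwards [eventually_gt_atTop 0] with n hn
  have hnR : (0:ℝ) < n := by exact_mod_cast hn
  field_simp

lemma tendsto_ratio (f : ℕ → ℝ) (c : ℝ)
    (h : ∀ᶠ n : ℕ in atTop, |f n - n * c| ≤ 2 + Lam n) :
    Tendsto (fun n : ℕ => f n / n) atTop (nhds c) := by
  have key : Tendsto (fun n : ℕ => f n / n - c) atTop (nhds 0) := by
    apply squeeze_zero_norm' _ tendsto_err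
    filter_upwards [h, eventually_gt_atTop 0] with n hb hn
    have hnR : (0:ℝ) < n := by exact_mod_cast hn
    rw [Real.norm_eq_abs]
    have heq2 : f n / n - c = (f n - n * c) / n := by field_simp
    rw [heq2, abs_div, abs_of_pos hnR]
    gcongr
  have := key.add_const c
  simpa using this

theorem limit_prop_one_three :
    Filter.Tendsto
      (fun n : ℕ => ((approx n (arc 0 (Real.pi / 3))).ncard : ℝ) / ((approx n unitCircle).ncard : ℝ))
      Filter.atTop (nhds ((1 + Real.sqrt 3) / 16)) := by
  have h34 : Real.sqrt (1 - (1/2:ℝ)^2) = Real.sqrt 3 / 2 := by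
    have hsq : (Real.sqrt 3 / 2 : ℝ)^2 = 3/4 := by
      rw [div_pow, Real.sq_sqrt (by norm_num : (0:ℝ) ≤ 3)]
      norm_num
    rw [show (1 - (1/2:ℝ)^2) = (3:ℝ)/4 by norm_num, ← hsq]
    exact Real.sqrt_sq (by positivity)
  have ha : Tendsto (fun n : ℕ => ((approx n (arc 0 (Real.pi / 3))).ncard : ℝ) / n) atTop
      (nhds (Real.sqrt 3 / 2 + 1 / 2)) := by
    apply tendsto_ratio
    filter_upwards [eventually_gt_atTop 0] with n hn
    have := ncard_bound n hn (1/2) (by norm_num) (by norm_num)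
    rw [h34] at this
    rw [arc_eq_Pset]
    convert this using 3
    ring
  have hb : Tendsto (fun n : ℕ => ((approx n unitCircle).ncard : ℝ) / n) atTop (nhds 8) := by
    have hq : Tendsto (fun n : ℕ => ((approx n (Pset 0)).ncard : ℝ) / n) atTop (nhds 2) := by
      apply tendsto_ratio
      filter_upwards [eventually_gt_atTop 0] with n hn
      have := ncard_bound n hn 0 le_rfl one_pos
      simp only [ne_eq, OfNat.ofNat_ne_zero, not_false_eq_true, zero_pow, sub_zero,
        Real.sqrt_one] at this
      convert this using 3
      ring
    have h4 := hq.const_mul (4:ℝ)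
    norm_num at h4
    apply h4.congr'
    filter_upwards [eventually_gt_atTop 0] with n hn
    rw [circle_ncard n hn]
    push_cast
    ring
  have hdiv := ha.div hb (by norm_num)
  have heq : (Real.sqrt 3 / 2 + 1 / 2) / 8 = (1 + Real.sqrt 3) / 16 := by ring
  rw [heq] at hdiv
  apply hdiv.congr'
  filter_upwards [eventually_gt_atTop 0] with n hn
  have hnR : (0:ℝ) < n := by exact_mod_cast hn
  simp only [Pi.div_apply]
  rcases eq_or_ne ((approx n unitCircle).ncard : ℝ) 0 with h0 | h0
  · rw [h0]
    simp
  · field_simp
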